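/- Let Q = H₊(ℤ) ⊥ H₊(ℤ) be the orthogonal sum of two symmetric hyperbolic planes over ℤ, i.e. ℤ⁴ with symmetric bilinear form given in basis e₁,f₁,e₂,f₂ by λ(eᵢ,fᵢ)=1, λ(eᵢ,eᵢ)=λ(fᵢ,fᵢ)=0, and the two planes orthogonal. Then the isometry group of Q acts transitively on primitive vectors of any fixed square: if v, w ∈ ℤ⁴ are both primitive (part of a ℤ-basis, equivalently with coprime coordinates) and λ(v,v) = λ(w,w), then there is an isometry of Q carrying v to w. -/

import Mathlib

/-- The orthogonal sum of two symmetric hyperbolic planes over ℤ, as a bilinear form on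
`ℤ⁴` in the basis `e₁, f₁, e₂, f₂`. -/
def hypSumForm (x y : Fin 4 → ℤ) : ℤ :=
  x 0 * y 1 + y 0 * x 1 + x 2 * y 3 + y 2 * x 3

namespace HypAux

abbrev V4 := Fin 4 → ℤ

/-- Reachability by an isometry of the form. -/
def Reach (v w : V4) : Prop :=
  ∃ g : V4 ≃ₗ[ℤ] V4, (∀ x y, hypSumForm (g x) (g y) = hypSumForm x y) ∧ g v = w

lemma reach_refl (v : V4) : Reach v v := ⟨LinearEquiv.refl ℤ V4, fun _ _ => rfl, rfl⟩

lemma reach_trans {u v w : V4} (h1 : Reach u v) (h2 : Reach v w) : Reach u w := by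
  obtain ⟨g, hg, hgv⟩ := h1
  obtain ⟨h, hh, hhv⟩ := h2
  exact ⟨g.trans h, fun x y => (hh _ _).trans (hg x y), by simp [hgv, hhv]⟩

lemma reach_symm {v w : V4} (h : Reach v w) : Reach w v := by
  obtain ⟨g, hg, hgv⟩ := h
  refine ⟨g.symm, fun x y => ?_, by simp [← hgv]⟩
  have := hg (g.symm x) (g.symm y)
  simpa using this.symm

lemma eta4 (v : V4) : v = ![v 0, v 1, v 2, v 3] := by
  funext i; fin_cases i <;> rfl

/-- Helper to build the moves. -/
def mkMove (f : ℤ → V4 → V4)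
    (hadd : ∀ k x y, f k (x + y) = f k x + f k y)
    (hsmul : ∀ k (c : ℤ) x, f k (c • x) = c • f k x)
    (hinv : ∀ k x, f (-k) (f k x) = x)
    (k : ℤ) : V4 ≃ₗ[ℤ] V4 where
  toFun := f k
  invFun := f (-k)
  map_add' := hadd k
  map_smul' := hsmul k
  left_inv := hinv k
  right_inv := fun x => by have := hinv (-k) x; simpa using this

def m1f (k : ℤ) (x : V4) : V4 := ![x 0 + k * x 3, x 1, x 2 - k * x 1, x 3]
def m2f (k : ℤ) (x : V4) : V4 := ![x 0, x 1 - k * x 2, x 2, x 3 + k * x 0]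
def m3f (k : ℤ) (x : V4) : V4 := ![x 0, x 1 + k * x 3, x 2 - k * x 0, x 3]
def m4f (k : ℤ) (x : V4) : V4 := ![x 0 + k * x 2, x 1, x 2, x 3 - k * x 1]
def m7f (k : ℤ) (x : V4) : V4 := ![x 0, x 1 - k * x 3, x 2 + k * x 0, x 3]
def spf (k : ℤ) (x : V4) : V4 := ![x 2, x 3, x 0, x 1]
def s2f (k : ℤ) (x : V4) : V4 := ![x 0, x 1, x 3, x 2]
def n1f (k : ℤ) (x : V4) : V4 := ![-x 0, -x 1, x 2, x 3]
def n2f (k : ℤ) (x : V4) : V4 := ![x 0, x 1, -x 2, -x 3]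

lemma reach_m1 (k a b c d : ℤ) : Reach ![a, b, c, d] ![a + k * d, b, c - k * b, d] := by
  refine ⟨mkMove m1f ?_ ?_ ?_ k, ?_, ?_⟩
  · intro k x y; funext i; fin_cases i <;> simp [m1f] <;> ring
  · intro k c x; funext i; fin_cases i <;> simp [m1f] <;> ring
  · intro k x; funext i; fin_cases i <;> simp [m1f] <;> ring
  · intro x y
    show hypSumForm (m1f k x) (m1f k y) = hypSumForm x y
    simp [m1f, hypSumForm]; ring
  · show m1f k ![a, b, c, d] = _
    funext i; fin_cases i <;> simp [m1f]

lemma reach_m2 (k a b c d : ℤ) : Reach ![a, b, c, d] ![a, b - k * c, c, d + k * a] := by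
  refine ⟨mkMove m2f ?_ ?_ ?_ k, ?_, ?_⟩
  · intro k x y; funext i; fin_cases i <;> simp [m2f] <;> ring
  · intro k c x; funext i; fin_cases i <;> simp [m2f] <;> ring
  · intro k x; funext i; fin_cases i <;> simp [m2f] <;> ring
  · intro x y
    show hypSumForm (m2f k x) (m2f k y) = hypSumForm x y
    simp [m2f, hypSumForm]; ring
  · show m2f k ![a, b, c, d] = _
    funext i; fin_cases i <;> simp [m2f]

lemma reach_m3 (k a b c d : ℤ) : Reach ![a, b, c, d] ![a, b + k * d, c - k * a, d] := by
  refine ⟨mkMove m3f ?_ ?_ ?_ k, ?_, ?_⟩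
  · intro k x y; funext i; fin_cases i <;> simp [m3f] <;> ring
  · intro k c x; funext i; fin_cases i <;> simp [m3f] <;> ring
  · intro k x; funext i; fin_cases i <;> simp [m3f] <;> ring
  · intro x y
    show hypSumForm (m3f k x) (m3f k y) = hypSumForm x y
    simp [m3f, hypSumForm]; ring
  · show m3f k ![a, b, c, d] = _
    funext i; fin_cases i <;> simp [m3f]

lemma reach_m4 (k a b c d : ℤ) : Reach ![a, b, c, d] ![a + k * c, b, c, d - k * b] := by
  refine ⟨mkMove m4f ?_ ?_ ?_ k, ?_, ?_⟩
  · intro k x y; funext i; fin_cases i <;> simp [m4f] <;> ring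
  · intro k c x; funext i; fin_cases i <;> simp [m4f] <;> ring
  · intro k x; funext i; fin_cases i <;> simp [m4f] <;> ring
  · intro x y
    show hypSumForm (m4f k x) (m4f k y) = hypSumForm x y
    simp [m4f, hypSumForm]; ring
  · show m4f k ![a, b, c, d] = _
    funext i; fin_cases i <;> simp [m4f]

lemma reach_m7 (k a b c d : ℤ) : Reach ![a, b, c, d] ![a, b - k * d, c + k * a, d] := by
  refine ⟨mkMove m7f ?_ ?_ ?_ k, ?_, ?_⟩
  · intro k x y; funext i; fin_cases i <;> simp [m7f] <;> ring
  · intro k c x; funext i; fin_cases i <;> simp [m7f] <;> ring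
  · intro k x; funext i; fin_cases i <;> simp [m7f] <;> ring
  · intro x y
    show hypSumForm (m7f k x) (m7f k y) = hypSumForm x y
    simp [m7f, hypSumForm]; ring
  · show m7f k ![a, b, c, d] = _
    funext i; fin_cases i <;> simp [m7f]

lemma reach_swapP (a b c d : ℤ) : Reach ![a, b, c, d] ![c, d, a, b] := by
  refine ⟨mkMove spf ?_ ?_ ?_ 0, ?_, ?_⟩
  · intro k x y; funext i; fin_cases i <;> simp [spf]
  · intro k c x; funext i; fin_cases i <;> simp [spf]
  · intro k x; funext i; fin_cases i <;> simp [spf]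
  · intro x y
    show hypSumForm (spf 0 x) (spf 0 y) = hypSumForm x y
    simp [spf, hypSumForm]; ring
  · show spf 0 ![a, b, c, d] = _
    funext i; fin_cases i <;> simp [spf]

lemma reach_swap2 (a b c d : ℤ) : Reach ![a, b, c, d] ![a, b, d, c] := by
  refine ⟨mkMove s2f ?_ ?_ ?_ 0, ?_, ?_⟩
  · intro k x y; funext i; fin_cases i <;> simp [s2f]
  · intro k c x; funext i; fin_cases i <;> simp [s2f]
  · intro k x; funext i; fin_cases i <;> simp [s2f]
  · intro x y
    show hypSumForm (s2f 0 x) (s2f 0 y) = hypSumForm x y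
    simp [s2f, hypSumForm]; ring
  · show s2f 0 ![a, b, c, d] = _
    funext i; fin_cases i <;> simp [s2f]

lemma reach_neg1 (a b c d : ℤ) : Reach ![a, b, c, d] ![-a, -b, c, d] := by
  refine ⟨mkMove n1f ?_ ?_ ?_ 0, ?_, ?_⟩
  · intro k x y; funext i; fin_cases i <;> simp [n1f] <;> ring
  · intro k c x; funext i; fin_cases i <;> simp [n1f] <;> ring
  · intro k x; funext i; fin_cases i <;> simp [n1f]
  · intro x y
    show hypSumForm (n1f 0 x) (n1f 0 y) = hypSumForm x y
    simp [n1f, hypSumForm]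
  · show n1f 0 ![a, b, c, d] = _
    funext i; fin_cases i <;> simp [n1f]

lemma reach_neg2 (a b c d : ℤ) : Reach ![a, b, c, d] ![a, b, -c, -d] := by
  refine ⟨mkMove n2f ?_ ?_ ?_ 0, ?_, ?_⟩
  · intro k x y; funext i; fin_cases i <;> simp [n2f] <;> ring
  · intro k c x; funext i; fin_cases i <;> simp [n2f] <;> ring
  · intro k x; funext i; fin_cases i <;> simp [n2f]
  · intro x y
    show hypSumForm (n2f 0 x) (n2f 0 y) = hypSumForm x y
    simp [n2f, hypSumForm]
  · show n2f 0 ![a, b, c, d] = _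
    funext i; fin_cases i <;> simp [n2f]


lemma igcd_add_mul_left (a b k : ℤ) : Int.gcd (a + k * b) b = Int.gcd a b := by
  apply Nat.dvd_antisymm
  · rw [← Int.natCast_dvd_natCast]
    refine Int.dvd_coe_gcd ?_ (Int.gcd_dvd_right _ _)
    have h1 : (↑((a + k * b).gcd b) : ℤ) ∣ a + k * b := Int.gcd_dvd_left _ _
    have h2 : (↑((a + k * b).gcd b) : ℤ) ∣ b := Int.gcd_dvd_right _ _
    have := dvd_sub h1 (h2.mul_left k)
    simpa using this
  · rw [← Int.natCast_dvd_natCast]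
    refine Int.dvd_coe_gcd ?_ (Int.gcd_dvd_right _ _)
    exact dvd_add (Int.gcd_dvd_left _ _) ((Int.gcd_dvd_right _ _).mul_left k)

lemma igcd_add_mul_right (a b k : ℤ) : Int.gcd a (b + k * a) = Int.gcd a b := by
  rw [Int.gcd_comm, igcd_add_mul_left, Int.gcd_comm]

lemma igcd_of_dvd (a d : ℤ) (h : d ∣ a) : Int.gcd a d = d.natAbs := by
  apply Nat.dvd_antisymm
  · rw [← Int.natCast_dvd_natCast]
    exact Int.dvd_natAbs.mpr (Int.gcd_dvd_right _ _)
  · rw [← Int.natCast_dvd_natCast]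
    exact Int.dvd_coe_gcd (Int.natAbs_dvd.mpr h) (Int.natAbs_dvd.mpr dvd_rfl)

lemma dvd_of_prim {v : V4} (hp : ∃ φ : V4 →ₗ[ℤ] ℤ, φ v = 1) (e : ℤ)
    (h : ∀ i, e ∣ v i) : e ∣ 1 := by
  obtain ⟨φ, hφ⟩ := hp
  rw [← hφ, LinearMap.pi_apply_eq_sum_univ φ v]
  refine Finset.dvd_sum fun i _ => ?_
  simpa [smul_eq_mul] using (h i).mul_right _

lemma prim_of_reach {v w : V4} (h : Reach v w)
    (hp : ∃ φ : V4 →ₗ[ℤ] ℤ, φ v = 1) : ∃ φ : V4 →ₗ[ℤ] ℤ, φ w = 1 := by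
  obtain ⟨g, _, hgv⟩ := h
  obtain ⟨φ, hφ⟩ := hp
  exact ⟨φ.comp g.symm.toLinearMap, by simp [← hgv, hφ]⟩

lemma igcd_neg_right (a d : ℤ) : Int.gcd a (-d) = Int.gcd a d := by
  simp [Int.gcd]

/-- Euclidean algorithm: kill the last coordinate using moves `m1`, `m2`. -/
lemma euclid_nonneg : ∀ (n : ℕ) (a b c d : ℤ), 0 ≤ d → d.natAbs ≤ n →
    ∃ a' b' c', Reach ![a, b, c, d] ![a', b', c', 0] ∧ a'.natAbs = Int.gcd a d := by
  intro n
  induction n using Nat.strong_induction_on with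
  | _ n ih =>
    intro a b c d hd0 hn
    by_cases hd : d = 0
    · subst hd
      exact ⟨a, b, c, reach_refl _, by simp⟩
    · have hpos : 0 < d := lt_of_le_of_ne hd0 (Ne.symm hd)
      set r := a % d with hr_def
      have h0r : 0 ≤ r := Int.emod_nonneg a hd
      have hrd : r < d := Int.emod_lt_of_pos a hpos
      have hdvd : d ∣ a - r := Int.dvd_self_sub_of_emod_eq rfl
      obtain ⟨q, hq⟩ := hdvd
      have hk : a + (-q) * d = r := by linarith [hq]
      -- first move : a ↦ r
      have s1 : Reach ![a, b, c, d] ![r, b, c - (-q) * b, d] := by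
        have := reach_m1 (-q) a b c d
        rwa [hk] at this
      have hgr : Int.gcd r d = Int.gcd a d := by
        rw [← hk, igcd_add_mul_left]
      by_cases hr0 : r = 0
      · -- d ∣ a : two more moves give first coordinate d, last coordinate 0
        have s2 : Reach ![r, b, c - (-q) * b, d] ![r + 1 * d, b, (c - (-q) * b) - 1 * b, d] :=
          reach_m1 1 r b (c - (-q) * b) d
        have hrd1 : r + 1 * d = d := by rw [hr0]; ring
        rw [hrd1] at s2
        have s3 : Reach ![d, b, (c - (-q) * b) - 1 * b, d]
            ![d, b - (-1) * ((c - (-q) * b) - 1 * b), (c - (-q) * b) - 1 * b, d + (-1) * d] :=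
          reach_m2 (-1) d b ((c - (-q) * b) - 1 * b) d
        have hd0 : d + (-1) * d = 0 := by ring
        rw [hd0] at s3
        refine ⟨d, _, _, reach_trans s1 (reach_trans s2 s3), ?_⟩
        have : Int.gcd a d = d.natAbs := igcd_of_dvd a d (by
          have : a = d * q + r := by linarith [hq]
          rw [this, hr0]; simp)
        rw [this]
      · -- 0 < r : reduce d mod r and recurse
        have hrpos : 0 < r := lt_of_le_of_ne h0r (Ne.symm hr0)
        set r2 := d % r with hr2_def
        have h0r2 : 0 ≤ r2 := Int.emod_nonneg d hr0
        have hr2r : r2 < r := Int.emod_lt_of_pos d hrpos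
        obtain ⟨q2, hq2⟩ := Int.dvd_self_sub_of_emod_eq (b := r) (a := d) (c := r2) rfl
        have hk2 : d + (-q2) * r = r2 := by linarith [hq2]
        have s2 : Reach ![r, b, c - (-q) * b, d]
            ![r, b - (-q2) * (c - (-q) * b), c - (-q) * b, r2] := by
          have := reach_m2 (-q2) r b (c - (-q) * b) d
          rwa [hk2] at this
        have hlt : r2.natAbs < n := by omega
        obtain ⟨a', b', c', hrec, hg⟩ :=
          ih r2.natAbs hlt r (b - (-q2) * (c - (-q) * b)) (c - (-q) * b) r2 h0r2 (le_refl _)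
        refine ⟨a', b', c', reach_trans s1 (reach_trans s2 hrec), ?_⟩
        rw [hg, ← hgr, ← hk2, igcd_add_mul_right]
lemma euclid (a b c d : ℤ) :
    ∃ a' b' c', Reach ![a, b, c, d] ![a', b', c', 0] ∧ a'.natAbs = Int.gcd a d := by
  rcases le_or_gt 0 d with h | h
  · exact euclid_nonneg d.natAbs a b c d h (le_refl _)
  · obtain ⟨a', b', c', hr, hg⟩ :=
      euclid_nonneg (-d).natAbs a b (-c) (-d) (by omega) (le_refl _)
    exact ⟨a', b', c', reach_trans (reach_neg2 a b c d) hr, by rw [hg, igcd_neg_right]⟩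

lemma vec4_congr {a b c d a' b' c' d' : ℤ} (h0 : a = a') (h1 : b = b') (h2 : c = c')
    (h3 : d = d') : (![a, b, c, d] : V4) = ![a', b', c', d'] := by
  subst h0; subst h1; subst h2; subst h3; rfl

/-- From `(a,b,0,0)` with `gcd a b = 1` we can reach `(1,q,0,0)`. -/
lemma finish_lemma (a b : ℤ) (hab : Int.gcd a b = 1) :
    ∃ q, Reach ![a, b, 0, 0] ![1, q, 0, 0] := by
  have hbez : (1 : ℤ) = a * Int.gcdA a b + b * Int.gcdB a b := by
    have := Int.gcd_eq_gcd_ab a b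
    rw [hab] at this; exact_mod_cast this
  set A := Int.gcdA a b
  set B := Int.gcdB a b
  have h1 := reach_m1 (-B) a b 0 0
  rw [vec4_congr (by ring : a + -B * 0 = a) rfl (by ring : 0 - -B * b = B * b) rfl] at h1
  have h2 := reach_m3 (-A) a b (B * b) 0
  rw [vec4_congr rfl (by ring : b + -A * 0 = b)
    (by linarith : B * b - -A * a = 1) rfl] at h2
  have h3 := reach_m4 (1 - a) a b 1 0
  rw [vec4_congr (by ring : a + (1 - a) * 1 = 1) rfl rfl
    (by ring : 0 - (1 - a) * b = (a - 1) * b)] at h3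
  have h4 := reach_m7 (-1) 1 b 1 ((a - 1) * b)
  rw [vec4_congr rfl (by ring : b - -1 * ((a - 1) * b) = b + (a - 1) * b)
    (by ring : 1 + -1 * 1 = 0) rfl] at h4
  have h5 := reach_m2 (-((a - 1) * b)) 1 (b + (a - 1) * b) 0 ((a - 1) * b)
  rw [vec4_congr rfl (by ring : b + (a - 1) * b - -((a - 1) * b) * 0 = b + (a - 1) * b) rfl
    (by ring : (a - 1) * b + -((a - 1) * b) * 1 = 0)] at h5
  exact ⟨b + (a - 1) * b,
    reach_trans h1 (reach_trans h2 (reach_trans h3 (reach_trans h4 h5)))⟩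

/-- Main loop: any primitive `(a,b,c,0)` reaches `(1,q,0,0)`. -/
lemma main_loop : ∀ (n : ℕ) (a b c : ℤ), Int.gcd a b ≤ n →
    (∃ φ : V4 →ₗ[ℤ] ℤ, φ ![a, b, c, 0] = 1) →
    ∃ q, Reach ![a, b, c, 0] ![1, q, 0, 0] := by
  intro n
  induction n using Nat.strong_induction_on with
  | _ n ih =>
    intro a b c hn hp
    by_cases h0 : Int.gcd a b = 0
    · -- a = b = 0, so c is a unit
      obtain ⟨ha, hb⟩ := Int.gcd_eq_zero_iff.mp h0
      subst ha; subst hb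
      have hc : c ∣ 1 := by
        refine dvd_of_prim hp c fun i => ?_
        fin_cases i <;> simp
      rcases Int.isUnit_iff.mp (isUnit_of_dvd_one hc) with hc1 | hc1 <;> subst hc1
      · exact ⟨0, reach_swapP 0 0 1 0⟩
      · refine ⟨0, reach_trans (reach_swapP 0 0 (-1) 0) ?_⟩
        have := reach_neg1 (-1) 0 0 0
        rw [vec4_congr (by ring : -(-1 : ℤ) = 1) (by ring : -(0:ℤ) = 0) rfl rfl] at this
        exact this
    · set gab := Int.gcd a b with hgab
      have hGpos : 0 < (gab : ℤ) := by omega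
      set c₀ := c % (gab : ℤ) with hc₀
      have h0c : 0 ≤ c₀ := Int.emod_nonneg c (by omega)
      have hcG : c₀ < (gab : ℤ) := Int.emod_lt_of_pos c hGpos
      obtain ⟨t, ht⟩ : (gab : ℤ) ∣ c - c₀ := Int.dvd_self_sub_of_emod_eq rfl
      have hbez : (gab : ℤ) = a * Int.gcdA a b + b * Int.gcdB a b := Int.gcd_eq_gcd_ab a b
      set A := Int.gcdA a b
      set B := Int.gcdB a b
      -- clear c down to c₀
      have s1 := reach_m3 (A * t) a b c 0
      rw [vec4_congr rfl (by ring : b + A * t * 0 = b) rfl rfl] at s1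
      have s2 := reach_m1 (B * t) a b (c - A * t * a) 0
      rw [vec4_congr (by ring : a + B * t * 0 = a) rfl
        (by rw [hbez] at ht; linarith : c - A * t * a - B * t * b = c₀) rfl] at s2
      have sv : Reach ![a, b, c, 0] ![a, b, c₀, 0] := reach_trans s1 s2
      by_cases hc0 : c₀ = 0
      · -- gab divides everything, hence gab = 1
        have hdc : (gab : ℤ) ∣ c := by
          have : c - c₀ = c := by rw [hc0]; ring
          rw [← this]; exact ⟨t, ht⟩
        have h1 : (gab : ℤ) ∣ 1 := by
          refine dvd_of_prim hp (gab : ℤ) fun i => ?_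
          fin_cases i
          · simpa using Int.gcd_dvd_left a b
          · simpa using Int.gcd_dvd_right a b
          · simpa using hdc
          · simp
        have hab1 : Int.gcd a b = 1 := by
          rcases Int.isUnit_iff.mp (isUnit_of_dvd_one h1) with h | h <;> omega
        obtain ⟨q, hq⟩ := finish_lemma a b hab1
        rw [hc0] at sv
        exact ⟨q, reach_trans sv hq⟩
      · -- Euclid on (a, c₀), strictly decreasing gcd a b
        have s3 := reach_swap2 a b c₀ 0
        obtain ⟨a', b', c', hr, hg⟩ := euclid a b 0 c₀
        have hchain : Reach ![a, b, c, 0] ![a', b', c', 0] :=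
          reach_trans sv (reach_trans s3 hr)
        have hg2 : Int.gcd a c₀ ≠ 0 := by
          simp only [Ne, Int.gcd_eq_zero_iff, not_and]
          intro _; exact hc0
        have ha' : a' ≠ 0 := by
          intro h; rw [h] at hg; simp at hg; omega
        have d1 : Int.gcd a' b' ∣ a'.natAbs := Nat.gcd_dvd_left _ _
        have le1 : Int.gcd a' b' ≤ a'.natAbs := Nat.le_of_dvd (by omega) d1
        have d2 : Int.gcd a c₀ ∣ c₀.natAbs := Nat.gcd_dvd_right _ _
        have le2 : Int.gcd a c₀ ≤ c₀.natAbs := Nat.le_of_dvd (by omega) d2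
        have lt3 : c₀.natAbs < gab := by omega
        have hlt : Int.gcd a' b' < n := by omega
        obtain ⟨q, hq⟩ := ih (Int.gcd a' b') hlt a' b' c' (le_refl _)
          (prim_of_reach hchain hp)
        exact ⟨q, reach_trans hchain hq⟩

/-- Every primitive vector reaches the standard vector `(1,q,0,0)`. -/
lemma to_std (v : V4) (hp : ∃ φ : V4 →ₗ[ℤ] ℤ, φ v = 1) :
    ∃ q, Reach v ![1, q, 0, 0] := by
  obtain ⟨a', b', c', hr, -⟩ := euclid (v 0) (v 1) (v 2) (v 3)
  have hrv : Reach v ![a', b', c', 0] := by rw [eta4 v]; exact hr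
  obtain ⟨q, hq⟩ := main_loop (Int.gcd a' b') a' b' c' (le_refl _) (prim_of_reach hrv hp)
  exact ⟨q, reach_trans hrv hq⟩

lemma form_of_reach {v w : V4} (h : Reach v w) : hypSumForm w w = hypSumForm v v := by
  obtain ⟨g, hg, hgv⟩ := h
  have := hg v v
  rwa [hgv] at this

end HypAux

open HypAux in
theorem hyperbolic_transitive_on_primitive_vectors
    (v w : Fin 4 → ℤ)
    (hv : ∃ φ : (Fin 4 → ℤ) →ₗ[ℤ] ℤ, φ v = 1)
    (hw : ∃ φ : (Fin 4 → ℤ) →ₗ[ℤ] ℤ, φ w = 1)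
    (hsq : hypSumForm v v = hypSumForm w w) :
    ∃ g : (Fin 4 → ℤ) ≃ₗ[ℤ] (Fin 4 → ℤ),
      (∀ x y, hypSumForm (g x) (g y) = hypSumForm x y) ∧ g v = w := by
  obtain ⟨q1, h1⟩ := to_std v hv
  obtain ⟨q2, h2⟩ := to_std w hw
  have e1 : hypSumForm v v = 2 * q1 := by
    have := form_of_reach h1
    simp [hypSumForm] at this ⊢
    linarith
  have e2 : hypSumForm w w = 2 * q2 := by
    have := form_of_reach h2
    simp [hypSumForm] at this ⊢
    linarith
  have hq : q1 = q2 := by rw [e1, e2] at hsq; linarith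
  subst hq
  obtain ⟨g, hg, hgv⟩ := reach_trans h1 (reach_symm h2)
  exact ⟨g, hg, hgv⟩
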